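/- Let w = u₁u₂⋯u_l be an FPF-involution word with l ≥ 2, write u₁ = a. If u₂ = a+1, then the word obtained by replacing u₂ = a+1 with a-1, i.e., a(a-1)u₃⋯u_l, is also an FPF-involution word for the same element z. (This is the relation i₁(i₁+1)⋯ ∼ i₁(i₁-1)⋯ for i₁ ≥ 2 in the FPF-equivalence.) -/
import Mathlib

/-- The function underlying the permutation `Θ = (12)(34)(56)⋯` on positive integers
(fixing `0`). -/
def thetaFun (n : ℕ) : ℕ :=
  if n = 0 then 0 else if n % 2 = 1 then n + 1 else n - 1

lemma thetaFun_involutive : Function.Involutive thetaFun := by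
  intro n
  by_cases h0 : n = 0
  · simp [thetaFun, h0]
  · by_cases h1 : n % 2 = 1
    · have e1 : thetaFun n = n + 1 := by simp [thetaFun, h0, h1]
      have h2 : ¬ ((n + 1) % 2 = 1) := by omega
      have h3 : ¬ (n + 1 = 0) := by omega
      rw [e1]
      simp only [thetaFun, if_neg h3, if_neg h2]
      omega
    · have e1 : thetaFun n = n - 1 := by simp [thetaFun, h0, h1]
      have h2 : (n - 1) % 2 = 1 := by omega
      have h3 : ¬ (n - 1 = 0) := by omega
      rw [e1]
      simp only [thetaFun, if_neg h3, if_pos h2]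
      omega

/-- The fixed-point-free involution `Θ = (12)(34)(56)⋯`. -/
def theta : Equiv.Perm ℕ := Function.Involutive.toPerm thetaFun thetaFun_involutive

/-- The simple transposition `s_i = (i, i+1)`. -/
def sPerm (i : ℕ) : Equiv.Perm ℕ := Equiv.swap i (i + 1)

/-- For a word `w = i₁i₂⋯i_l`, the permutation `s_{i_l}⋯s_{i₁} Θ s_{i₁}⋯s_{i_l}`. -/
def heckeConj (w : List ℕ) : Equiv.Perm ℕ :=
  ((w.map sPerm).reverse).prod * theta * (w.map sPerm).prod

/-- `w` is a symplectic Hecke word for `z`, i.e. a word of positive letters with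
`z = s_{i_l}⋯s_{i₁} Θ s_{i₁}⋯s_{i_l}`. -/
def SympHecke (z : Equiv.Perm ℕ) (w : List ℕ) : Prop :=
  (∀ i ∈ w, 1 ≤ i) ∧ z = heckeConj w

/-- `z` belongs to `F_∞`, the conjugacy set `{π⁻¹ Θ π : π ∈ S_∞}`. -/
def InFinf (z : Equiv.Perm ℕ) : Prop := ∃ w : List ℕ, SympHecke z w

/-- `w` is an FPF-involution word for `z`: a symplectic Hecke word for `z` of minimal
length among all symplectic Hecke words for `z`. -/
def IsFPFWordFor (z : Equiv.Perm ℕ) (w : List ℕ) : Prop :=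
  SympHecke z w ∧ ∀ w' : List ℕ, SympHecke z w' → w.length ≤ w'.length

/-- `w` is an FPF-involution word (for the element it determines). -/
def IsFPFWord (w : List ℕ) : Prop := IsFPFWordFor (heckeConj w) w

lemma theta_apply' (n : ℕ) : theta n = thetaFun n := rfl

lemma sPerm_eval (i n v : ℕ)
    (h : (n = i ∧ v = i + 1) ∨ (n = i + 1 ∧ v = i) ∨ (n ≠ i ∧ n ≠ i + 1 ∧ v = n)) :
    sPerm i n = v := by
  simp only [sPerm, Equiv.swap_apply_def]
  split_ifs <;> omega

lemma theta_eval (n v : ℕ)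
    (h : (n = 0 ∧ v = 0) ∨ (n % 2 = 1 ∧ v = n + 1) ∨ (n ≠ 0 ∧ n % 2 = 0 ∧ v = n - 1)) :
    theta n = v := by
  rw [theta_apply']; unfold thetaFun; split_ifs <;> omega

lemma odd_conj (a : ℕ) (h : a % 2 = 1) : sPerm a * theta * sPerm a = theta := by
  ext n
  simp only [Equiv.Perm.mul_apply, sPerm, Equiv.swap_apply_def, theta_apply', thetaFun]
  split_ifs <;> first | contradiction | omega

lemma even_conj (a : ℕ) (ha : 2 ≤ a) (h : a % 2 = 0) :
    sPerm (a + 1) * sPerm a * theta * sPerm a * sPerm (a + 1) =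
      sPerm (a - 1) * sPerm a * theta * sPerm a * sPerm (a - 1) := by
  obtain ⟨c, rfl⟩ : ∃ c, a = 2 * c + 2 := ⟨(a - 2) / 2, by omega⟩
  ext n
  simp only [Equiv.Perm.mul_apply]
  by_cases h1 : n = 2 * c + 1
  · subst h1
    rw [sPerm_eval (2*c+2+1) (2*c+1) (2*c+1) (by omega),
        sPerm_eval (2*c+2) (2*c+1) (2*c+1) (by omega),
        theta_eval (2*c+1) (2*c+2) (by omega),
        sPerm_eval (2*c+2) (2*c+2) (2*c+3) (by omega),
        sPerm_eval (2*c+2+1) (2*c+3) (2*c+4) (by omega),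
        sPerm_eval (2*c+2-1) (2*c+1) (2*c+2) (by omega),
        sPerm_eval (2*c+2) (2*c+2) (2*c+3) (by omega),
        theta_eval (2*c+3) (2*c+4) (by omega),
        sPerm_eval (2*c+2) (2*c+4) (2*c+4) (by omega),
        sPerm_eval (2*c+2-1) (2*c+4) (2*c+4) (by omega)]
  by_cases h2 : n = 2 * c + 2
  · subst h2
    rw [sPerm_eval (2*c+2+1) (2*c+2) (2*c+2) (by omega),
        sPerm_eval (2*c+2) (2*c+2) (2*c+3) (by omega),
        theta_eval (2*c+3) (2*c+4) (by omega),
        sPerm_eval (2*c+2) (2*c+4) (2*c+4) (by omega),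
        sPerm_eval (2*c+2+1) (2*c+4) (2*c+3) (by omega),
        sPerm_eval (2*c+2-1) (2*c+2) (2*c+1) (by omega),
        sPerm_eval (2*c+2) (2*c+1) (2*c+1) (by omega),
        theta_eval (2*c+1) (2*c+2) (by omega),
        sPerm_eval (2*c+2) (2*c+2) (2*c+3) (by omega),
        sPerm_eval (2*c+2-1) (2*c+3) (2*c+3) (by omega)]
  by_cases h3 : n = 2 * c + 3
  · subst h3
    rw [sPerm_eval (2*c+2+1) (2*c+3) (2*c+4) (by omega),
        sPerm_eval (2*c+2) (2*c+4) (2*c+4) (by omega),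
        theta_eval (2*c+4) (2*c+3) (by omega),
        sPerm_eval (2*c+2) (2*c+3) (2*c+2) (by omega),
        sPerm_eval (2*c+2+1) (2*c+2) (2*c+2) (by omega),
        sPerm_eval (2*c+2-1) (2*c+3) (2*c+3) (by omega),
        sPerm_eval (2*c+2) (2*c+3) (2*c+2) (by omega),
        theta_eval (2*c+2) (2*c+1) (by omega),
        sPerm_eval (2*c+2) (2*c+1) (2*c+1) (by omega),
        sPerm_eval (2*c+2-1) (2*c+1) (2*c+2) (by omega)]
  by_cases h4 : n = 2 * c + 4
  · subst h4
    rw [sPerm_eval (2*c+2+1) (2*c+4) (2*c+3) (by omega),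
        sPerm_eval (2*c+2) (2*c+3) (2*c+2) (by omega),
        theta_eval (2*c+2) (2*c+1) (by omega),
        sPerm_eval (2*c+2) (2*c+1) (2*c+1) (by omega),
        sPerm_eval (2*c+2+1) (2*c+1) (2*c+1) (by omega),
        sPerm_eval (2*c+2-1) (2*c+4) (2*c+4) (by omega),
        sPerm_eval (2*c+2) (2*c+4) (2*c+4) (by omega),
        theta_eval (2*c+4) (2*c+3) (by omega),
        sPerm_eval (2*c+2) (2*c+3) (2*c+2) (by omega),
        sPerm_eval (2*c+2-1) (2*c+2) (2*c+1) (by omega)]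
  · rw [sPerm_eval (2*c+2+1) n n (by omega),
        sPerm_eval (2*c+2) n n (by omega),
        sPerm_eval (2*c+2-1) n n (by omega),
        sPerm_eval (2*c+2) n n (by omega),
        theta_apply' n]
    have hm : thetaFun n ≠ 2*c+1 ∧ thetaFun n ≠ 2*c+2 ∧ thetaFun n ≠ 2*c+3 ∧ thetaFun n ≠ 2*c+4 := by
      unfold thetaFun; split_ifs <;> omega
    obtain ⟨m1, m2, m3, m4⟩ := hm
    rw [sPerm_eval (2*c+2) (thetaFun n) (thetaFun n) (by omega),
        sPerm_eval (2*c+2+1) (thetaFun n) (thetaFun n) (by omega),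
        sPerm_eval (2*c+2-1) (thetaFun n) (thetaFun n) (by omega)]

lemma heckeConj_cons_cons (x y : ℕ) (rest : List ℕ) :
    heckeConj (x :: y :: rest) =
      ((rest.map sPerm).reverse).prod *
        (sPerm y * sPerm x * theta * sPerm x * sPerm y) * (rest.map sPerm).prod := by
  simp [heckeConj, mul_assoc]

lemma heckeConj_cons (y : ℕ) (rest : List ℕ) :
    heckeConj (y :: rest) =
      ((rest.map sPerm).reverse).prod *
        (sPerm y * theta * sPerm y) * (rest.map sPerm).prod := by
  simp [heckeConj, mul_assoc]

/-- If `a(a+1)u₃⋯u_l` is an FPF-involution word for `z` with `a ≥ 2`, then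
`a(a-1)u₃⋯u_l` is also an FPF-involution word for `z`. -/
theorem fpf_initial_letter_relation (z : Equiv.Perm ℕ) (a : ℕ) (rest : List ℕ)
    (ha : 2 ≤ a) (h : IsFPFWordFor z (a :: (a + 1) :: rest)) :
    IsFPFWordFor z (a :: (a - 1) :: rest) := by
  obtain ⟨⟨hpos, hz⟩, hmin⟩ := h
  -- a must be even, otherwise we could drop the first letter
  have haeven : a % 2 = 0 := by
    by_contra hodd
    have h1 : a % 2 = 1 := by omega
    have hdrop : heckeConj (a :: (a + 1) :: rest) = heckeConj ((a + 1) :: rest) := by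
      rw [heckeConj_cons_cons, heckeConj_cons]
      have : sPerm (a + 1) * sPerm a * theta * sPerm a * sPerm (a + 1) =
          sPerm (a + 1) * theta * sPerm (a + 1) := by
        have := odd_conj a h1
        calc sPerm (a + 1) * sPerm a * theta * sPerm a * sPerm (a + 1)
            = sPerm (a + 1) * (sPerm a * theta * sPerm a) * sPerm (a + 1) := by
              simp [mul_assoc]
          _ = sPerm (a + 1) * theta * sPerm (a + 1) := by rw [this]
      rw [this]
    have hsh : SympHecke z ((a + 1) :: rest) := by
      refine ⟨?_, by rw [hz, hdrop]⟩
      intro i hi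
      exact hpos i (by simpa using Or.inr hi)
    have := hmin _ hsh
    simp only [List.length_cons] at this
    omega
  -- the key permutation identity
  have hkey : heckeConj (a :: (a + 1) :: rest) = heckeConj (a :: (a - 1) :: rest) := by
    rw [heckeConj_cons_cons, heckeConj_cons_cons, even_conj a ha haeven]
  have hsh' : SympHecke z (a :: (a - 1) :: rest) := by
    refine ⟨?_, by rw [hz, hkey]⟩
    intro i hi
    simp only [List.mem_cons] at hi
    rcases hi with hi | hi | hi
    · omega
    · omega
    · exact hpos i (by simp [hi])
  refine ⟨hsh', ?_⟩
  intro w' hw'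
  have := hmin w' hw'
  simpa using this
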